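/- For all n ≥ 2, F_n(x,s,q) - x·F_{n-1}(x,s,q) - s·F_{n-2}(x,s,q) = ∑_{k=1}^{⌊n/2⌋} (-1)^k q^{(k-1)(n-k)} s^k (1 - q^{n-2k}) F_{n-2k}(x,s,q). -/

import Mathlib

open Finset

noncomputable section

abbrev K : Type := RatFunc ℚ

def q : K := RatFunc.X

def qint (a : K) (m : ℕ) : K := ∑ i ∈ range m, a ^ i

def qfact (a : K) (m : ℕ) : K := ∏ i ∈ range m, qint a (i + 1)

def qbinom (a : K) (n k : ℕ) : K :=
  if k ≤ n then qfact a n / (qfact a k * qfact a (n - k)) else 0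

/-- q-Fibonacci polynomials F_n(x,s,q) with base `a`. -/
def qF (a x s : K) : ℕ → K
  | 0 => 0
  | n + 1 => ∑ k ∈ range (n / 2 + 1),
      a ^ (k * (k + 1) / 2) * qbinom a (n - k) k * s ^ k * x ^ (n - 2 * k)

/-- q-Lucas polynomials L_n(x,s,q) with base `a` (L_0 = 2). -/
def qL (a x s : K) (n : ℕ) : K :=
  if n = 0 then 2 else
  ∑ k ∈ range (n / 2 + 1),
    a ^ (k * (k - 1) / 2) * (qint a n / qint a (n - k)) * qbinom a (n - k) k
      * s ^ k * x ^ (n - 2 * k)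

/-- Starred variant: L*_0 = 1, L*_n = L_n for n > 0. -/
def qLs (a x s : K) (n : ℕ) : K := if n = 0 then 1 else qL a x s n

/-- Rogers-Szegő polynomial. -/
def rs (a x y : K) (m : ℕ) : K := ∑ j ∈ range (m + 1), qbinom a m j * x ^ j * y ^ (m - j)

/-- q-Pochhammer (q;q)_m. -/
def qpoch (a : K) (m : ℕ) : K := ∏ j ∈ range m, (1 - a ^ (j + 1))

/- ## Auxiliary lemmas -/

lemma q_ne_zero : q ≠ 0 := by
  simpa [q] using RatFunc.X_ne_zero (K := ℚ)

lemma q_pow_ne_one (m : ℕ) (hm : 1 ≤ m) : q ^ m ≠ 1 := by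
  intro h
  have : (algebraMap (Polynomial ℚ) K) (Polynomial.X ^ m) = (algebraMap (Polynomial ℚ) K) 1 := by
    simpa [map_pow, q, RatFunc.algebraMap_X] using h
  have h2 := RatFunc.algebraMap_injective ℚ this
  have := congrArg Polynomial.natDegree h2
  simp [Polynomial.natDegree_X_pow] at this
  omega

lemma qint_ne_zero (m : ℕ) (hm : 1 ≤ m) : qint q m ≠ 0 := by
  intro h
  have hg : (∑ i ∈ range m, q ^ i) * (q - 1) = q ^ m - 1 := geom_sum_mul q m
  rw [show (∑ i ∈ range m, q ^ i) = qint q m from rfl, h, zero_mul] at hg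
  have : q ^ m = 1 := by linear_combination -hg
  exact q_pow_ne_one m hm this

lemma qfact_ne_zero (m : ℕ) : qfact q m ≠ 0 := by
  unfold qfact
  exact Finset.prod_ne_zero_iff.mpr fun i _ => qint_ne_zero (i+1) (by omega)

lemma qfact_succ (m : ℕ) : qfact q (m+1) = qfact q m * qint q (m+1) := Finset.prod_range_succ _ _

lemma qint_add (a b : ℕ) : qint q (a + b) = qint q a + q ^ a * qint q b := by
  unfold qint
  rw [Finset.sum_range_add, Finset.mul_sum]
  congr 1
  exact Finset.sum_congr rfl fun i _ => by rw [pow_add]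

lemma qbinom_self (n : ℕ) : qbinom q n n = 1 := by
  unfold qbinom
  rw [if_pos le_rfl]
  rw [Nat.sub_self]
  have h0 : qfact q 0 = 1 := Finset.prod_range_zero _
  rw [h0, mul_one, div_self (qfact_ne_zero n)]

lemma qbinom_zero (n : ℕ) : qbinom q n 0 = 1 := by
  unfold qbinom
  rw [if_pos (Nat.zero_le n)]
  have h0 : qfact q 0 = 1 := Finset.prod_range_zero _
  rw [h0, one_mul, Nat.sub_zero, div_self (qfact_ne_zero n)]

lemma qbinom_of_gt {n k : ℕ} (h : n < k) : qbinom q n k = 0 := by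
  unfold qbinom; rw [if_neg (by omega)]

lemma pascalA (m k : ℕ) (hk : k ≤ m) :
    qbinom q (m+1) (k+1) = qbinom q m (k+1) + q ^ (m - k) * qbinom q m k := by
  rcases eq_or_lt_of_le hk with rfl | hlt
  · rw [qbinom_self, qbinom_of_gt (by omega), qbinom_self]; simp
  · have h1 : k + 1 ≤ m := hlt
    unfold qbinom
    rw [if_pos (by omega), if_pos (by omega), if_pos (by omega)]
    have e1 : m + 1 - (k+1) = m - k := by omega
    have e2 : m - (k+1) = m - k - 1 := by omega
    rw [e1, e2]
    have f1 : qfact q (m+1) = qfact q m * qint q (m+1) := qfact_succ m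
    have f2 : qfact q (m-k) = qfact q (m-k-1) * qint q (m-k) := by
      have h : m - k - 1 + 1 = m - k := by omega
      rw [← h, qfact_succ, Nat.add_sub_cancel]
    have f3 : qfact q (k+1) = qfact q k * qint q (k+1) := qfact_succ k
    have key : qint q (m+1) = qint q (m-k) + q ^ (m-k) * qint q (k+1) := by
      have : m + 1 = (m - k) + (k + 1) := by omega
      rw [this, qint_add]
    rw [f1, f2, f3, key]
    have h4 := qfact_ne_zero (m-k-1)
    have h5 := qfact_ne_zero k
    have h6 := qfact_ne_zero m
    have h7 : qint q (m-k) ≠ 0 := qint_ne_zero _ (by omega)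
    have h8 : qint q (k+1) ≠ 0 := qint_ne_zero _ (by omega)
    field_simp

lemma pascalB (m k : ℕ) (hk : k ≤ m) :
    qbinom q (m+1) (k+1) = q ^ (k+1) * qbinom q m (k+1) + qbinom q m k := by
  rcases eq_or_lt_of_le hk with rfl | hlt
  · rw [qbinom_self, qbinom_of_gt (by omega), qbinom_self]; simp
  · have h1 : k + 1 ≤ m := hlt
    unfold qbinom
    rw [if_pos (by omega), if_pos (by omega), if_pos (by omega)]
    have e1 : m + 1 - (k+1) = m - k := by omega
    have e2 : m - (k+1) = m - k - 1 := by omega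
    rw [e1, e2]
    have f1 : qfact q (m+1) = qfact q m * qint q (m+1) := qfact_succ m
    have f2 : qfact q (m-k) = qfact q (m-k-1) * qint q (m-k) := by
      have h : m - k - 1 + 1 = m - k := by omega
      rw [← h, qfact_succ, Nat.add_sub_cancel]
    have f3 : qfact q (k+1) = qfact q k * qint q (k+1) := qfact_succ k
    have key : qint q (m+1) = qint q (k+1) + q ^ (k+1) * qint q (m-k) := by
      have : m + 1 = (k + 1) + (m - k) := by omega
      rw [this, qint_add]
    rw [f1, f2, f3, key]
    have h4 := qfact_ne_zero (m-k-1)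
    have h5 := qfact_ne_zero k
    have h6 := qfact_ne_zero m
    have h7 : qint q (m-k) ≠ 0 := qint_ne_zero _ (by omega)
    have h8 : qint q (k+1) ≠ 0 := qint_ne_zero _ (by omega)
    field_simp
    ring

lemma tri_succ (j : ℕ) : (j+1) * (j+1+1) / 2 = j * (j+1) / 2 + (j+1) := by
  obtain ⟨c, hc⟩ := Nat.even_mul_succ_self j
  have h2 : (j+1) * (j+1+1) = j * (j+1) + 2*(j+1) := by ring
  rw [h2, hc]
  omega

lemma tri_ge (j : ℕ) : j ≤ j * (j+1) / 2 := by
  obtain ⟨c, hc⟩ := Nat.even_mul_succ_self j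
  have : j ≤ c := by nlinarith [hc]
  omega

/-- Extended-range form of the `qF` sum. -/
lemma qF_sum (x s : K) (m M : ℕ) (hM : m / 2 + 1 ≤ M) :
    qF q x s (m+1)
      = ∑ k ∈ range M, q ^ (k * (k + 1) / 2) * qbinom q (m - k) k * s ^ k * x ^ (m - 2 * k) := by
  rw [qF]
  apply Finset.sum_subset (Finset.range_subset_range.mpr hM)
  intro k _ hk
  simp only [Finset.mem_range, not_lt] at hk
  have : qbinom q (m - k) k = 0 := qbinom_of_gt (by omega)
  rw [this]
  ring

lemma qF_zero (x s : K) : qF q x s 0 = 0 := rfl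

lemma qF_one (x s : K) : qF q x s 1 = 1 := by
  show (∑ k ∈ range (0/2 + 1), _ : K) = 1
  simp [qbinom_zero]

lemma qF_two (x s : K) : qF q x s 2 = x := by
  show (∑ k ∈ range (1/2 + 1), _ : K) = x
  simp [qbinom_zero]

lemma qF_three (x s : K) : qF q x s 3 = x^2 + q * s := by
  show (∑ k ∈ range (2/2 + 1), q ^ (k*(k+1)/2) * qbinom q (2-k) k * s^k * x^(2-2*k) : K) = _
  rw [show (2/2 + 1 : ℕ) = 2 from rfl, Finset.sum_range_succ, Finset.sum_range_one]
  simp [qbinom_zero, qbinom_self]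

/-- Recurrence R1: `F_{n+2}(x,s) = x F_{n+1}(x,s) + q^n s F_n(x, q⁻¹ s)`. -/
lemma recR1 (x s : K) (n : ℕ) :
    qF q x s (n+2) = x * qF q x s (n+1) + q ^ n * s * qF q x (q⁻¹ * s) n := by
  rcases n with _ | p
  · rw [qF_two, qF_one, qF_zero]; ring
  · show qF q x s (p+2+1) = x * qF q x s (p+1+1) + q ^ (p+1) * s * qF q x (q⁻¹ * s) (p+1)
    have hA : qF q x s (p+2+1)
        = ∑ k ∈ range (p/2 + 2),
            q ^ (k*(k+1)/2) * qbinom q (p+2-k) k * s^k * x^(p+2-2*k) :=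
      qF_sum x s (p+2) (p/2+2) (by omega)
    have hB : x * qF q x s (p+1+1)
        = ∑ k ∈ range (p/2 + 2),
            q ^ (k*(k+1)/2) * qbinom q (p+1-k) k * s^k * x^(p+2-2*k) := by
      rw [qF_sum x s (p+1) (p/2+2) (by omega), Finset.mul_sum]
      apply Finset.sum_congr rfl
      intro k hk
      by_cases h2k : 2*k ≤ p + 1
      · have e : p + 2 - 2*k = (p+1-2*k) + 1 := by omega
        rw [e, pow_succ]
        ring
      · have e : qbinom q (p+1-k) k = 0 := qbinom_of_gt (by omega)
        rw [e]
        ring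
    have hC : q ^ (p+1) * s * qF q x (q⁻¹ * s) (p+1)
        = ∑ j ∈ range (p/2 + 1),
            q ^ ((p+1) + j*(j+1)/2) * qbinom q (p-j) j * (q ^ j)⁻¹ * s^(j+1) * x^(p-2*j) := by
      rw [qF_sum x (q⁻¹*s) p (p/2+1) le_rfl, Finset.mul_sum]
      apply Finset.sum_congr rfl
      intro j _
      rw [mul_pow, inv_pow, pow_add]
      ring
    rw [hA, hB, hC, ← sub_eq_iff_eq_add', ← Finset.sum_sub_distrib]
    rw [show (p/2 + 2) = (p/2 + 1) + 1 from rfl, Finset.sum_range_succ']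
    have h0 : (q ^ (0*(0+1)/2) * qbinom q (p+2-0) 0 * s^0 * x^(p+2-2*0)
        - q ^ (0*(0+1)/2) * qbinom q (p+1-0) 0 * s^0 * x^(p+2-2*0) : K) = 0 := by
      rw [qbinom_zero, qbinom_zero]; ring
    rw [h0, add_zero]
    apply Finset.sum_congr rfl
    intro j hj
    simp only [Finset.mem_range] at hj
    have h2j : 2*j ≤ p := by omega
    have e1 : p + 2 - (j+1) = (p - j) + 1 := by omega
    have e2 : p + 1 - (j+1) = p - j := by omega
    have e3 : p + 2 - 2*(j+1) = p - 2*j := by omega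
    rw [e1, e2, e3, pascalA (p-j) j (by omega)]
    have e4 : p - j - j = p - 2*j := by omega
    have etri : (j+1)*(j+1+1)/2 = j*(j+1)/2 + (j+1) := tri_succ j
    have eexp : (p+1) + j*(j+1)/2 = j*(j+1)/2 + (j+1) + (p - 2*j) + j := by omega
    rw [e4, etri, eexp]
    have hqj : (q : K) ^ j ≠ 0 := pow_ne_zero _ q_ne_zero
    have hq : (q : K) ≠ 0 := q_ne_zero
    simp only [pow_add]
    field_simp
    ring

/-- Recurrence R2: `F_{m+2}(x, q⁻¹ s) = x F_{m+1}(x,s) + s F_m(x,s)`. -/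
lemma recR2 (x s : K) (m : ℕ) :
    qF q x (q⁻¹ * s) (m+2) = x * qF q x s (m+1) + s * qF q x s m := by
  rcases m with _ | p
  · rw [qF_two, qF_one, qF_zero]; ring
  · show qF q x (q⁻¹ * s) (p+2+1) = x * qF q x s (p+1+1) + s * qF q x s (p+1)
    have hA : qF q x (q⁻¹*s) (p+2+1)
        = ∑ k ∈ range (p/2 + 2),
            q ^ (k*(k+1)/2) * qbinom q (p+2-k) k * (q^k)⁻¹ * s^k * x^(p+2-2*k) := by
      rw [qF_sum x (q⁻¹*s) (p+2) (p/2+2) (by omega)]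
      apply Finset.sum_congr rfl
      intro k _
      rw [mul_pow, inv_pow]
      ring
    have hB : x * qF q x s (p+1+1)
        = ∑ k ∈ range (p/2 + 2),
            q ^ (k*(k+1)/2) * qbinom q (p+1-k) k * s^k * x^(p+2-2*k) := by
      rw [qF_sum x s (p+1) (p/2+2) (by omega), Finset.mul_sum]
      apply Finset.sum_congr rfl
      intro k hk
      by_cases h2k : 2*k ≤ p + 1
      · have e : p + 2 - 2*k = (p+1-2*k) + 1 := by omega
        rw [e, pow_succ]
        ring
      · have e : qbinom q (p+1-k) k = 0 := qbinom_of_gt (by omega)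
        rw [e]
        ring
    have hC : s * qF q x s (p+1)
        = ∑ j ∈ range (p/2 + 1),
            q ^ (j*(j+1)/2) * qbinom q (p-j) j * s^(j+1) * x^(p-2*j) := by
      rw [qF_sum x s p (p/2+1) le_rfl, Finset.mul_sum]
      apply Finset.sum_congr rfl
      intro j _
      ring
    rw [hA, hB, hC, ← sub_eq_iff_eq_add', ← Finset.sum_sub_distrib]
    rw [show (p/2 + 2) = (p/2 + 1) + 1 from rfl, Finset.sum_range_succ']
    have h0 : (q ^ (0*(0+1)/2) * qbinom q (p+2-0) 0 * (q^0)⁻¹ * s^0 * x^(p+2-2*0)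
        - q ^ (0*(0+1)/2) * qbinom q (p+1-0) 0 * s^0 * x^(p+2-2*0) : K) = 0 := by
      rw [qbinom_zero, qbinom_zero]; simp
    rw [h0, add_zero]
    apply Finset.sum_congr rfl
    intro j hj
    simp only [Finset.mem_range] at hj
    have h2j : 2*j ≤ p := by omega
    have e1 : p + 2 - (j+1) = (p - j) + 1 := by omega
    have e2 : p + 1 - (j+1) = p - j := by omega
    have e3 : p + 2 - 2*(j+1) = p - 2*j := by omega
    rw [e1, e2, e3, pascalB (p-j) j (by omega)]
    have etri : (j+1)*(j+1+1)/2 = j*(j+1)/2 + (j+1) := tri_succ j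
    rw [etri]
    have hqj : (q : K) ^ (j+1) ≠ 0 := pow_ne_zero _ q_ne_zero
    have hq : (q : K) ≠ 0 := q_ne_zero
    simp only [pow_add]
    field_simp
    ring

theorem stmt6 (x s : K) (n : ℕ) (hn : 2 ≤ n) :
    qF q x s n - x * qF q x s (n - 1) - s * qF q x s (n - 2)
      = ∑ k ∈ Icc 1 (n / 2), (-1 : K) ^ k * q ^ ((k - 1) * (n - k)) * s ^ k
          * (1 - q ^ (n - 2 * k)) * qF q x s (n - 2 * k) := by
  suffices h : ∀ m : ℕ,
      qF q x s (m+2) - x * qF q x s (m+1) - s * qF q x s m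
        = ∑ k ∈ Icc 1 ((m+2) / 2), (-1 : K) ^ k * q ^ ((k - 1) * ((m+2) - k)) * s ^ k
          * (1 - q ^ ((m+2) - 2 * k)) * qF q x s ((m+2) - 2 * k) by
    obtain ⟨m, rfl⟩ : ∃ m, n = m + 2 := ⟨n - 2, by omega⟩
    have hm := h m
    rw [show m+2-1 = m+1 from rfl, show m+2-2 = m from rfl]
    exact hm
  intro m
  induction m using Nat.strong_induction_on with
  | _ m ih =>
    match m with
    | 0 =>
      rw [qF_two, qF_one, qF_zero]
      rw [show ((0+2)/2 : ℕ) = 1 from rfl, Finset.Icc_self, Finset.sum_singleton]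
      norm_num [show qF q x s (0+2-2*1) = 0 from rfl]
    | 1 =>
      rw [show (1:ℕ)+2 = 3 from rfl, qF_three, qF_two, qF_one]
      rw [show ((3:ℕ)/2) = 1 from rfl, Finset.Icc_self, Finset.sum_singleton]
      rw [show (3:ℕ)-2*1 = 1 from rfl, qF_one]
      norm_num
      ring
    | (m + 2) =>
      have IH := ih m (by omega)
      have hR1 := recR1 x s (m+2)
      have hR2 := recR2 x s m
      have hLHS : qF q x s (m+2+2) - x * qF q x s (m+2+1) - s * qF q x s (m+2)
          = - (s * (1 - q^(m+2)) * qF q x s (m+2))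
            - s * q^(m+2) * (qF q x s (m+2) - x * qF q x s (m+1) - s * qF q x s m) := by
        rw [hR1, hR2]
        ring
      have hN : (m + 2 + 2) / 2 = m/2 + 2 := by omega
      have hN2 : (m + 2) / 2 = m/2 + 1 := by omega
      have hRHS : (∑ k ∈ Icc 1 ((m+2+2) / 2), (-1 : K) ^ k * q ^ ((k - 1) * ((m+2+2) - k)) * s ^ k
            * (1 - q ^ ((m+2+2) - 2 * k)) * qF q x s ((m+2+2) - 2 * k))
          = - (s * (1 - q^(m+2)) * qF q x s (m+2))
            - s * q^(m+2) * ∑ k ∈ Icc 1 ((m+2) / 2), (-1 : K) ^ k * q ^ ((k - 1) * ((m+2) - k)) * s ^ k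
              * (1 - q ^ ((m+2) - 2 * k)) * qF q x s ((m+2) - 2 * k) := by
        rw [hN, hN2]
        rw [← Finset.Ico_add_one_right_eq_Icc, Finset.sum_Ico_eq_sum_range,
            show m/2+2+1-1 = (m/2+1)+1 from by omega, Finset.sum_range_succ']
        rw [← Finset.Ico_add_one_right_eq_Icc, Finset.sum_Ico_eq_sum_range,
            show m/2+1+1-1 = m/2+1 from by omega]
        have hfirst : ((-1 : K) ^ (1+0) * q ^ ((1+0-1) * ((m+2+2) - (1+0))) * s ^ (1+0)
            * (1 - q ^ ((m+2+2) - 2*(1+0))) * qF q x s ((m+2+2) - 2*(1+0)))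
            = - (s * (1 - q^(m+2)) * qF q x s (m+2)) := by
          rw [show (1+0-1) * ((m+2+2) - (1+0)) = 0 from by omega,
              show (m+2+2) - 2*(1+0) = m+2 from by omega]
          ring
        rw [hfirst]
        have hsum : (∑ i ∈ range (m/2+1), (-1 : K) ^ (1+(i+1)) * q ^ ((1+(i+1)-1) * ((m+2+2) - (1+(i+1)))) * s ^ (1+(i+1))
            * (1 - q ^ ((m+2+2) - 2*(1+(i+1)))) * qF q x s ((m+2+2) - 2*(1+(i+1))))
            = - (s * q^(m+2) * ∑ i ∈ range (m/2+1), (-1 : K) ^ (1+i) * q ^ ((1+i-1) * ((m+2) - (1+i))) * s ^ (1+i)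
              * (1 - q ^ ((m+2) - 2*(1+i))) * qF q x s ((m+2) - 2*(1+i))) := by
          rw [Finset.mul_sum, ← Finset.sum_neg_distrib]
          apply Finset.sum_congr rfl
          intro i hi
          simp only [Finset.mem_range] at hi
          have h2i : 2*i ≤ m := by omega
          obtain ⟨d, hd⟩ := Nat.le.dest h2i
          have e1 : 1+(i+1)-1 = i+1 := by omega
          have e2 : (m+2+2) - (1+(i+1)) = i + d + 2 := by omega
          have e3 : (m+2+2) - 2*(1+(i+1)) = m - 2*i := by omega
          have e4 : 1+i-1 = i := by omega
          have e5 : (m+2) - (1+i) = i + d + 1 := by omega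
          have e6 : (m+2) - 2*(1+i) = m - 2*i := by omega
          have e7 : (i+1) * (i+d+2) = (m+2) + i * (i+d+1) := by
            have : m + 2 = 2*i + d + 2 := by omega
            rw [this]; ring
          rw [e1, e2, e3, e4, e5, e6, e7]
          rw [show (1:ℕ)+(i+1) = i+2 from by omega, show (1:ℕ)+i = i+1 from by omega]
          simp only [pow_add]
          ring
        rw [hsum]
        ring
      rw [hLHS, IH, hRHS]
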